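/- For all integers r ≥ 3 and n ≥ 2r−1 such that r−1 does not divide n−1, there exists no n-vertex connected BP_3-free r-uniform hypergraph. -/

import Mathlib

namespace Berge

def IsBergePath {n : ℕ} (E : Finset (Finset (Fin n))) (k : ℕ)
    (v : Fin (k + 1) → Fin n) (f : Fin k → Finset (Fin n)) : Prop :=
  Function.Injective v ∧ Function.Injective f ∧ (∀ i, f i ∈ E) ∧
    ∀ i : Fin k, v i.castSucc ∈ f i ∧ v i.succ ∈ f i

def HasBergePath {n : ℕ} (E : Finset (Finset (Fin n))) (k : ℕ) : Prop :=
  ∃ v f, IsBergePath E k v f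

def BPFree {n : ℕ} (E : Finset (Finset (Fin n))) (k : ℕ) : Prop :=
  ¬ HasBergePath E k

def Connected {n : ℕ} (E : Finset (Finset (Fin n))) : Prop :=
  ∀ x y : Fin n, ∃ (k : ℕ) (v : Fin (k + 1) → Fin n) (f : Fin k → Finset (Fin n)),
    IsBergePath E k v f ∧ (∃ i, v i = x) ∧ (∃ i, v i = y)

def Uniform {n : ℕ} (E : Finset (Finset (Fin n))) (r : ℕ) : Prop :=
  ∀ e ∈ E, e.card = r

noncomputable def exConn (n r k : ℕ) : ℕ :=
  sSup {m | ∃ E : Finset (Finset (Fin n)),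
    Uniform E r ∧ Connected E ∧ BPFree E k ∧ E.card = m}

def IsBergeCycle {n : ℕ} (E : Finset (Finset (Fin n))) (k : ℕ)
    (v : Fin k → Fin n) (f : Fin k → Finset (Fin n)) : Prop :=
  Function.Injective v ∧ Function.Injective f ∧ (∀ i, f i ∈ E) ∧
    ∀ i : Fin k, v i ∈ f i ∧ v ⟨(i.val + 1) % k, Nat.mod_lt _ i.pos⟩ ∈ f i


lemma subpath {n : ℕ} {E : Finset (Finset (Fin n))} {k : ℕ} (hk : 3 ≤ k)
    (h : HasBergePath E k) : HasBergePath E 3 := by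
  obtain ⟨v, f, hvi, hfi, hfE, hvf⟩ := h
  refine ⟨fun i => v ⟨i, by omega⟩, fun i => f ⟨i, by omega⟩, ?_, ?_, fun i => hfE _, ?_⟩
  · intro i j hij
    have h2 := hvi hij
    simp only [Fin.mk.injEq] at h2
    exact Fin.ext h2
  · intro i j hij
    have h2 := hfi hij
    simp only [Fin.mk.injEq] at h2
    exact Fin.ext h2
  · intro i
    exact ⟨(hvf ⟨i, by omega⟩).1, (hvf ⟨i, by omega⟩).2⟩

lemma shortconn {n : ℕ} {E : Finset (Finset (Fin n))} (hC : Connected E) (hF : BPFree E 3)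
    {x y : Fin n} (hxy : x ≠ y) :
    (∃ g ∈ E, x ∈ g ∧ y ∈ g) ∨
    (∃ g ∈ E, ∃ h ∈ E, g ≠ h ∧ ∃ m, m ≠ x ∧ m ≠ y ∧ x ∈ g ∧ m ∈ g ∧ m ∈ h ∧ y ∈ h) := by
  obtain ⟨k, v, f, hp, ⟨i, hix⟩, ⟨j, hjy⟩⟩ := hC x y
  have hk : k ≤ 2 := by
    by_contra hk
    exact hF (subpath (by omega) ⟨v, f, hp⟩)
  obtain ⟨hvi, hfi, hfE, hvf⟩ := hp
  have hij : i ≠ j := by rintro rfl; exact hxy (hix ▸ hjy)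
  interval_cases k
  · exact absurd (show i = j from Fin.ext (by omega)) hij
  · -- k = 1 : v 0, v 1 ∈ f 0
    have h0 := hvf 0
    left
    refine ⟨f 0, hfE 0, ?_, ?_⟩ <;>
      · fin_cases i <;> fin_cases j <;> simp_all <;> first | exact hix ▸ h0.1 | exact hix ▸ h0.2 | exact hjy ▸ h0.1 | exact hjy ▸ h0.2
  · -- k = 2
    have h0 := hvf 0
    have h1 := hvf 1
    have e01 : v (0:Fin 3) ∈ f 0 := h0.1
    have e11 : v (1:Fin 3) ∈ f 0 := h0.2
    have e12 : v (1:Fin 3) ∈ f 1 := h1.1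
    have e22 : v (2:Fin 3) ∈ f 1 := h1.2
    have hf01 : f 0 ≠ f 1 := fun h => absurd (hfi h) (by decide)
    have hv01 : v (0:Fin 3) ≠ v (1:Fin 3) := fun h => absurd (hvi h) (by decide)
    have hv02 : v (0:Fin 3) ≠ v (2:Fin 3) := fun h => absurd (hvi h) (by decide)
    have hv12 : v (1:Fin 3) ≠ v (2:Fin 3) := fun h => absurd (hvi h) (by decide)
    fin_cases i <;> fin_cases j <;> simp_all
    · exact Or.inl ⟨f 0, hfE.1, e01, e11⟩
    · exact Or.inr ⟨f 0, hfE.1, f 1, hfE.2, hf01, v 1, fun h => hv01 h.symm, hv12, e01, e11, e12, e22⟩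
    · exact Or.inl ⟨f 0, hfE.1, e11, e01⟩
    · exact Or.inl ⟨f 1, hfE.2, e12, e22⟩
    · exact Or.inr ⟨f 1, hfE.2, f 0, hfE.1, fun h => hf01 h.symm, v 1, hv12, fun h => hv01 h.symm, e22, e12, e11, e01⟩
    · exact Or.inl ⟨f 1, hfE.2, e22, e12⟩

lemma cover {n : ℕ} {E : Finset (Finset (Fin n))} (hC : Connected E) (hF : BPFree E 3)
    (hn : 2 ≤ n) (x : Fin n) : ∃ e ∈ E, x ∈ e := by
  have : ∃ y : Fin n, y ≠ x := Fintype.exists_ne_of_one_lt_card (by simp; omega) x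
  obtain ⟨y, hy⟩ := this
  rcases shortconn hC hF hy.symm with ⟨g, hg, hxg, _⟩ | ⟨g, hg, _, _, _, _, _, _, hxg, _⟩
  · exact ⟨g, hg, hxg⟩
  · exact ⟨g, hg, hxg⟩

lemma pick3 {α : Type*} [DecidableEq α] {e : Finset α} (he : 3 ≤ e.card) (x y : α) :
    ∃ z ∈ e, z ≠ x ∧ z ≠ y := by
  have h1 : (e ∩ {x, y}).card ≤ 2 := by
    calc (e ∩ {x, y}).card ≤ ({x, y} : Finset α).card := Finset.card_le_card Finset.inter_subset_right
    _ ≤ 2 := Finset.card_insert_le _ _ |>.trans (by simp)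
  have h2 : (e \ {x, y}).card + (e ∩ {x, y}).card = e.card := Finset.card_sdiff_add_card_inter e {x, y}
  have h3 : (e \ {x, y}).Nonempty := by rw [← Finset.card_pos]; omega
  obtain ⟨z, hz⟩ := h3
  simp only [Finset.mem_sdiff, Finset.mem_insert, Finset.mem_singleton] at hz
  exact ⟨z, hz.1, fun h => hz.2 (Or.inl h), fun h => hz.2 (Or.inr h)⟩

lemma mkBP3 {n : ℕ} {E : Finset (Finset (Fin n))} {e1 e2 e3 : Finset (Fin n)} {a b c d : Fin n}
    (he1 : e1 ∈ E) (he2 : e2 ∈ E) (he3 : e3 ∈ E)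
    (h12 : e1 ≠ e2) (h13 : e1 ≠ e3) (h23 : e2 ≠ e3)
    (hab : a ≠ b) (hac : a ≠ c) (had : a ≠ d) (hbc : b ≠ c) (hbd : b ≠ d) (hcd : c ≠ d)
    (ha : a ∈ e1) (hb : b ∈ e1) (hb2 : b ∈ e2) (hc2 : c ∈ e2) (hc3 : c ∈ e3) (hd : d ∈ e3) :
    HasBergePath E 3 := by
  refine ⟨![a, b, c, d], ![e1, e2, e3], ?_, ?_, ?_, ?_⟩
  · intro i j hij
    fin_cases i <;> fin_cases j <;> simp_all
  · intro i j hij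
    fin_cases i <;> fin_cases j <;> simp_all
  · intro i; fin_cases i <;> assumption
  · intro i; fin_cases i <;> exact ⟨by assumption, by assumption⟩

lemma intne {n r : ℕ} {E : Finset (Finset (Fin n))} (hU : Uniform E r) (hr : 3 ≤ r)
    (hC : Connected E) (hF : BPFree E 3) {e f : Finset (Fin n)}
    (he : e ∈ E) (hf : f ∈ E) (hef : e ≠ f) : (e ∩ f).Nonempty := by
  by_contra hcon
  have hd : ∀ a, a ∈ e → a ∉ f := fun a ha haf => hcon ⟨a, Finset.mem_inter.2 ⟨ha, haf⟩⟩
  have hce : 3 ≤ e.card := (hU e he) ▸ hr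
  have hcf : 3 ≤ f.card := (hU f hf) ▸ hr
  obtain ⟨x, hx⟩ : e.Nonempty := Finset.card_pos.1 (by omega)
  obtain ⟨y, hy⟩ : f.Nonempty := Finset.card_pos.1 (by omega)
  have hxy : x ≠ y := fun h => hd x hx (h ▸ hy)
  rcases shortconn hC hF hxy with ⟨g, hg, hxg, hyg⟩ |
    ⟨g, hg, h, hh, hgh, m, hmx, hmy, hxg, hmg, hmh, hyh⟩
  · have hge : e ≠ g := fun hq => hd y (hq ▸ hyg) hy
    have hgf : g ≠ f := fun hq => hd x hx (hq ▸ hxg)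
    obtain ⟨a, ha, hax, -⟩ := pick3 hce x x
    obtain ⟨b, hb, hby, hba⟩ := pick3 hcf y a
    exact hF (mkBP3 he hg hf hge hef hgf hax (fun q => hd a ha (q ▸ hy)) (fun q => hd a ha (q ▸ hb))
      hxy (fun q => hd x hx (q ▸ hb)) (fun q => hby q.symm) ha hx hxg hyg hy hb)
  · by_cases hmf : m ∈ f
    · have hge : e ≠ g := fun hq => hd m (hq ▸ hmg) hmf
      have hgf : g ≠ f := fun hq => hd x hx (hq ▸ hxg)
      obtain ⟨a, ha, hax, -⟩ := pick3 hce x x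
      obtain ⟨b, hb, hbm, hba⟩ := pick3 hcf m a
      exact hF (mkBP3 he hg hf hge hef hgf hax (fun q => hd a ha (q ▸ hmf))
        (fun q => hd a ha (q ▸ hb)) (fun q => hmx q.symm) (fun q => hd x hx (q ▸ hb))
        (fun q => hbm q.symm) ha hx hxg hmg hmf hb)
    · by_cases hme : m ∈ e
      · have hhe : e ≠ h := fun hq => hd y (hq ▸ hyh) hy
        have hhf : h ≠ f := fun hq => hmf (hq ▸ hmh)
        obtain ⟨a, ha, ham, -⟩ := pick3 hce m m
        obtain ⟨b, hb, hby, hba⟩ := pick3 hcf y a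
        exact hF (mkBP3 he hh hf hhe hef hhf ham (fun q => hd a ha (q ▸ hy))
          (fun q => hd a ha (q ▸ hb)) (fun q => hd m hme (q ▸ hy)) (fun q => hmf (q ▸ hb))
          (fun q => hby q.symm) ha hme hmh hyh hy hb)
      · have hge : e ≠ g := fun hq => hme (hq ▸ hmg)
        have hhe : e ≠ h := fun hq => hd y (hq ▸ hyh) hy
        obtain ⟨a, ha, hax, -⟩ := pick3 hce x x
        exact hF (mkBP3 he hg hh hge hhe hgh hax (fun q => hme (by rwa [q] at ha))
          (fun q => hd a ha (q ▸ hy)) (fun q => hmx q.symm) hxy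
          hmy ha hx hxg hmg hmh hyh)


lemma int1 {n r : ℕ} {E : Finset (Finset (Fin n))} (hU : Uniform E r) (hr : 3 ≤ r)
    (hn : 2 * r - 1 ≤ n) (hC : Connected E) (hF : BPFree E 3) {e f : Finset (Fin n)}
    (he : e ∈ E) (hf : f ∈ E) (hef : e ≠ f) : (e ∩ f).card = 1 := by
  have hne := intne hU hr hC hF he hf hef
  have hcard1 : 1 ≤ (e ∩ f).card := Finset.card_pos.2 hne
  by_contra hcon
  have hcard2 : 2 ≤ (e ∩ f).card := by omega
  have hce : 3 ≤ e.card := (hU e he) ▸ hr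
  have hcf : 3 ≤ f.card := (hU f hf) ▸ hr
  by_cases h3 : ∃ g ∈ E, g ≠ e ∧ g ≠ f
  · obtain ⟨g, hg, hge, hgf⟩ := h3
    have hcg : 3 ≤ g.card := (hU g hg) ▸ hr
    obtain ⟨a, ha, b, hb, hab⟩ := Finset.one_lt_card.1 hcard2
    obtain ⟨w, hw⟩ := intne hU hr hC hF hg he hge
    have hwg : w ∈ g := (Finset.mem_inter.1 hw).1
    have hwe : w ∈ e := (Finset.mem_inter.1 hw).2
    obtain ⟨p, hpef, hpw⟩ : ∃ p, p ∈ e ∩ f ∧ p ≠ w := by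
      by_cases hwa : w = a
      · exact ⟨b, hb, fun q => hab (q.trans hwa).symm⟩
      · exact ⟨a, ha, fun q => hwa (q.symm)⟩
    have hpe : p ∈ e := (Finset.mem_inter.1 hpef).1
    have hpf : p ∈ f := (Finset.mem_inter.1 hpef).2
    obtain ⟨u, hu, hup, huw⟩ := pick3 hcf p w
    by_cases hz : (g \ {w, p, u}).Nonempty
    · obtain ⟨z, hzz⟩ := hz
      simp only [Finset.mem_sdiff, Finset.mem_insert, Finset.mem_singleton] at hzz
      obtain ⟨hzg, hzw⟩ := hzz
      push_neg at hzw
      exact hF (mkBP3 hf he hg (Ne.symm hef) hgf.symm hge.symm hup huw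
        (fun q => hzw.2.2 q.symm) hpw (fun q => hzw.2.1 q.symm) (fun q => hzw.1 q.symm)
        hu hpf hpe hwe hwg hzg)
    · rw [Finset.not_nonempty_iff_eq_empty, Finset.sdiff_eq_empty_iff_subset] at hz
      have hwpu : ({w, p, u} : Finset (Fin n)).card ≤ 3 := by
        refine (Finset.card_insert_le _ _).trans ?_
        have := Finset.card_insert_le p ({u} : Finset (Fin n))
        simp at this ⊢; omega
      have hgeq : g = {w, p, u} := Finset.eq_of_subset_of_card_le hz (by omega)
      have hpg : p ∈ g := by rw [hgeq]; simp
      have hug : u ∈ g := by rw [hgeq]; simp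
      obtain ⟨x, hxx⟩ : (e \ {w, p, u}).Nonempty := by
        by_contra hx
        rw [Finset.not_nonempty_iff_eq_empty, Finset.sdiff_eq_empty_iff_subset] at hx
        exact hge (hgeq.trans (Finset.eq_of_subset_of_card_le hx (by omega)).symm)
      simp only [Finset.mem_sdiff, Finset.mem_insert, Finset.mem_singleton] at hxx
      obtain ⟨hxe, hxw⟩ := hxx
      push_neg at hxw
      exact hF (mkBP3 he hg hf hge.symm hef hgf hxw.1 hxw.2.1 hxw.2.2 hpw.symm
        (fun q => huw q.symm) (fun q => hup q.symm) hxe hwe hwg hpg hpf hu)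
  · -- all edges are e or f
    push_neg at h3
    have hn2 : 2 ≤ n := by omega
    have huniv : (Finset.univ : Finset (Fin n)) ⊆ e ∪ f := by
      intro x _
      obtain ⟨g, hg, hxg⟩ := cover hC hF hn2 x
      rcases eq_or_ne g e with rfl | hge
      · exact Finset.mem_union_left _ hxg
      · rw [h3 g hg hge] at hxg
        exact Finset.mem_union_right _ hxg
    have h4 := Finset.card_union_add_card_inter e f
    have hcer : e.card = r := hU e he
    have hcfr : f.card = r := hU f hf
    have h5 : n ≤ (e ∪ f).card := by
      calc n = (Finset.univ : Finset (Fin n)).card := by simp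
      _ ≤ _ := Finset.card_le_card huniv
    omega

lemma samept {n r : ℕ} {E : Finset (Finset (Fin n))} (hU : Uniform E r) (hr : 3 ≤ r)
    (hn : 2 * r - 1 ≤ n) (hC : Connected E) (hF : BPFree E 3) {A B C : Finset (Fin n)}
    (hA : A ∈ E) (hB : B ∈ E) (hC' : C ∈ E) (hAB : A ≠ B) (hAC : A ≠ C) (hBC : B ≠ C)
    {x y : Fin n} (hx : x ∈ A ∩ B) (hy : y ∈ A ∩ C) : x = y := by
  by_contra hne
  obtain ⟨t, ht⟩ := Finset.card_eq_one.1 (int1 hU hr hn hC hF hA hB hAB)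
  obtain ⟨s, hs⟩ := Finset.card_eq_one.1 (int1 hU hr hn hC hF hA hC' hAC)
  have hxA : x ∈ A := (Finset.mem_inter.1 hx).1
  have hxB : x ∈ B := (Finset.mem_inter.1 hx).2
  have hyA : y ∈ A := (Finset.mem_inter.1 hy).1
  have hyC : y ∈ C := (Finset.mem_inter.1 hy).2
  have hyB : y ∉ B := by
    intro hq
    have : y ∈ A ∩ B := Finset.mem_inter.2 ⟨hyA, hq⟩
    have hx' : x ∈ ({t} : Finset (Fin n)) := ht ▸ hx
    have hy' : y ∈ ({t} : Finset (Fin n)) := ht ▸ this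
    simp at hx' hy'; exact hne (hx'.trans hy'.symm)
  have hxC : x ∉ C := by
    intro hq
    have : x ∈ A ∩ C := Finset.mem_inter.2 ⟨hxA, hq⟩
    have hx' : x ∈ ({s} : Finset (Fin n)) := hs ▸ this
    have hy' : y ∈ ({s} : Finset (Fin n)) := hs ▸ hy
    simp at hx' hy'; exact hne (hx'.trans hy'.symm)
  have hcB : 3 ≤ B.card := (hU B hB) ▸ hr
  have hcC : 3 ≤ C.card := (hU C hC') ▸ hr
  obtain ⟨u, hu, hux, huy⟩ := pick3 hcB x y
  obtain ⟨z, hz, hzy, hzu⟩ := pick3 hcC y u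
  exact hF (mkBP3 hB hA hC' (Ne.symm hAB) hBC hAC hux huy (fun q => hzu q.symm)
    hne (fun q => hxC (q ▸ hz)) (fun q => hzy q.symm) hu hxB hxA hyA hyC hz)


theorem stmt2 (r n : ℕ) (hr : 3 ≤ r) (hn : 2 * r - 1 ≤ n) (hndvd : ¬ (r - 1) ∣ (n - 1)) :
    ¬ ∃ E : Finset (Finset (Fin n)), Uniform E r ∧ Connected E ∧ BPFree E 3 := by
  rintro ⟨E, hU, hC, hF⟩
  have hn2 : 2 ≤ n := by omega
  obtain ⟨e0, he0, -⟩ := cover hC hF hn2 ⟨0, by omega⟩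
  obtain ⟨c, hcall, hpair⟩ : ∃ c, (∀ g ∈ E, c ∈ g) ∧
      (∀ e ∈ E, ∀ f ∈ E, e ≠ f → e ∩ f = {c}) := by
    by_cases h1 : ∃ f ∈ E, f ≠ e0
    · obtain ⟨e1, he1, h01⟩ := h1
      obtain ⟨c, hc⟩ := intne hU hr hC hF he0 he1 (Ne.symm h01)
      have hce0 : c ∈ e0 := (Finset.mem_inter.1 hc).1
      have hce1 : c ∈ e1 := (Finset.mem_inter.1 hc).2
      have hcall : ∀ g ∈ E, c ∈ g := by
        intro g hg
        rcases eq_or_ne g e0 with rfl | hge0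
        · exact hce0
        rcases eq_or_ne g e1 with rfl | hge1
        · exact hce1
        obtain ⟨y, hy⟩ := intne hU hr hC hF he0 hg (Ne.symm hge0)
        have hcy := samept hU hr hn hC hF he0 he1 hg (Ne.symm h01) (Ne.symm hge0)
          (Ne.symm hge1) hc hy
        rw [hcy]
        exact (Finset.mem_inter.1 hy).2
      refine ⟨c, hcall, ?_⟩
      intro e he f hf hef
      obtain ⟨t, ht⟩ := Finset.card_eq_one.1 (int1 hU hr hn hC hF he hf hef)
      have hcef : c ∈ e ∩ f := Finset.mem_inter.2 ⟨hcall e he, hcall f hf⟩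
      have : c ∈ ({t} : Finset (Fin n)) := ht ▸ hcef
      simp at this
      rw [ht, this]
    · push_neg at h1
      have hce : 3 ≤ e0.card := (hU e0 he0) ▸ hr
      obtain ⟨c, hc⟩ : e0.Nonempty := Finset.card_pos.1 (by omega)
      refine ⟨c, fun g hg => (h1 g hg) ▸ hc, fun e he f hf hef => absurd ((h1 e he).trans (h1 f hf).symm) hef⟩
  -- counting
  have hdisj : ∀ x ∈ E, ∀ y ∈ E, x ≠ y → Disjoint (x.erase c) (y.erase c) := by
    intro x hx y hy hxy
    rw [Finset.disjoint_left]
    intro a hax hay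
    have h1 : a ∈ x ∩ y := Finset.mem_inter.2 ⟨Finset.mem_of_mem_erase hax, Finset.mem_of_mem_erase hay⟩
    rw [hpair x hx y hy hxy] at h1
    simp at h1
    exact (Finset.ne_of_mem_erase hax) h1
  have hcardB : (E.biUnion (fun e => e.erase c)).card = E.card * (r - 1) := by
    rw [Finset.card_biUnion hdisj]
    rw [Finset.sum_congr rfl (fun e he => by
      rw [Finset.card_erase_of_mem (hcall e he), hU e he])]
    simp [mul_comm]
  have huniv : E.biUnion (fun e => e.erase c) = Finset.univ.erase c := by
    ext a
    simp only [Finset.mem_biUnion, Finset.mem_erase, Finset.mem_univ, and_true]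
    constructor
    · rintro ⟨e, he, hae⟩
      exact hae.1
    · intro hac
      obtain ⟨e, he, hae⟩ := cover hC hF hn2 a
      exact ⟨e, he, hac, hae⟩
  have hcount : n - 1 = E.card * (r - 1) := by
    rw [← hcardB, huniv, Finset.card_erase_of_mem (Finset.mem_univ c)]
    simp
  exact hndvd ⟨E.card, by rw [hcount]; ring⟩


end Berge
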